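/- In ℝ³ with S(x) the cross-product matrix (S(x)y = x × y) and Δ_ξ = diag(ξ₁,ξ₂,ξ₃) with all ξᵢ > 0, for any vectors b₁, b₂ and fᵢ = Δ_ξ⁻¹bᵢ (i=1,2), the following are equivalent: (1) span{f₁, f₂, Δ_ξ⁻¹S(αf₁+βf₂)Δ_ξ(αf₁+βf₂) : α,β ∈ ℝ} = ℝ³; (2) span{b₁, b₂, S(αb₁+βb₂)Δ_ξ⁻¹(αb₁+βb₂) : α,β ∈ ℝ} = ℝ³. -/
import Mathlib


open Matrix

/-- Crouch-condition equivalence for the rigid body: with fᵢ = Δ_ξ⁻¹bᵢ,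
span{f₁, f₂, Δ_ξ⁻¹S(αf₁+βf₂)Δ_ξ(αf₁+βf₂)} = ℝ³ iff
span{b₁, b₂, S(αb₁+βb₂)Δ_ξ⁻¹(αb₁+βb₂)} = ℝ³,
where S(x)y = x × y and Δ_ξ = diag(ξ₁,ξ₂,ξ₃), ξᵢ > 0. -/
theorem rigid_body_crouch_equiv (ξ : Fin 3 → ℝ) (hξ : ∀ i, 0 < ξ i)
    (b₁ b₂ : Fin 3 → ℝ)
    (f₁ f₂ : Fin 3 → ℝ)
    (hf₁ : f₁ = fun i => (ξ i)⁻¹ * b₁ i)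
    (hf₂ : f₂ = fun i => (ξ i)⁻¹ * b₂ i) :
    (Submodule.span ℝ ({f₁, f₂} ∪
        {x | ∃ α β : ℝ, x = fun i => (ξ i)⁻¹ *
          (crossProduct (α • f₁ + β • f₂) (fun j => ξ j * (α • f₁ + β • f₂) j)) i})
      = ⊤) ↔
    (Submodule.span ℝ ({b₁, b₂} ∪
        {x | ∃ α β : ℝ, x =
          crossProduct (α • b₁ + β • b₂) (fun j => (ξ j)⁻¹ * (α • b₁ + β • b₂) j)})
      = ⊤) := by
  have hξ' : ∀ i, ξ i ≠ 0 := fun i => (hξ i).ne'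
  set e : (Fin 3 → ℝ) ≃ₗ[ℝ] (Fin 3 → ℝ) :=
    LinearEquiv.piCongrRight fun i => LinearEquiv.smulOfNeZero ℝ ℝ (ξ i) (hξ' i) with he
  have happ : ∀ v : Fin 3 → ℝ, ∀ i, e v i = ξ i * v i := by
    intro v i
    simp [he, LinearEquiv.smulOfNeZero_apply, Units.smul_def, smul_eq_mul]
  have hef₁ : e f₁ = b₁ := by
    funext i; rw [happ, hf₁]; exact mul_inv_cancel_left₀ (hξ' i) _
  have hef₂ : e f₂ = b₂ := by
    funext i; rw [happ, hf₂]; exact mul_inv_cancel_left₀ (hξ' i) _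
  -- key pointwise identities
  have hF : ∀ α β : ℝ, (fun j => (ξ j)⁻¹ * (α • b₁ + β • b₂) j) = α • f₁ + β • f₂ := by
    intro α β; funext j
    simp [hf₁, hf₂, mul_add, smul_eq_mul]; ring
  have hB : ∀ α β : ℝ, (α • b₁ + β • b₂) = fun j => ξ j * (α • f₁ + β • f₂) j := by
    intro α β; funext j
    simp [hf₁, hf₂, mul_add, smul_eq_mul, mul_left_comm,
      mul_inv_cancel_left₀ (hξ' j)]
  have hthird : ∀ α β : ℝ,
      e (fun i => (ξ i)⁻¹ *
          (crossProduct (α • f₁ + β • f₂) (fun j => ξ j * (α • f₁ + β • f₂) j)) i)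
        = -(crossProduct (α • b₁ + β • b₂) (fun j => (ξ j)⁻¹ * (α • b₁ + β • b₂) j)) := by
    intro α β
    rw [hF, ← hB, cross_anticomm]
    funext i
    rw [happ]
    exact mul_inv_cancel_left₀ (hξ' i) _
  set S₁ : Set (Fin 3 → ℝ) := ({f₁, f₂} ∪
      {x | ∃ α β : ℝ, x = fun i => (ξ i)⁻¹ *
        (crossProduct (α • f₁ + β • f₂) (fun j => ξ j * (α • f₁ + β • f₂) j)) i}) with hS₁
  set S₂ : Set (Fin 3 → ℝ) := ({b₁, b₂} ∪
      {x | ∃ α β : ℝ, x =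
        crossProduct (α • b₁ + β • b₂) (fun j => (ξ j)⁻¹ * (α • b₁ + β • b₂) j)}) with hS₂
  have key : Submodule.span ℝ S₂ = Submodule.map (e : (Fin 3 → ℝ) →ₗ[ℝ] (Fin 3 → ℝ))
      (Submodule.span ℝ S₁) := by
    rw [Submodule.map_span]
    have hcoe : ⇑((e : (Fin 3 → ℝ) →ₗ[ℝ] (Fin 3 → ℝ))) = ⇑e := rfl
    rw [hcoe]
    apply Submodule.span_eq_span
    · rintro x (h | h)
      · rcases h with h | h
        · subst h
          exact Submodule.subset_span ⟨f₁, Or.inl (Or.inl rfl), hef₁⟩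
        · rw [Set.mem_singleton_iff] at h; subst h
          exact Submodule.subset_span ⟨f₂, Or.inl (Or.inr rfl), hef₂⟩
      · rcases h with ⟨α, β, rfl⟩
        have hm : (-(crossProduct (α • b₁ + β • b₂)
            (fun j => (ξ j)⁻¹ * (α • b₁ + β • b₂) j))) ∈ e '' S₁ :=
          ⟨_, Or.inr ⟨α, β, rfl⟩, hthird α β⟩
        have h2 := Submodule.neg_mem _ (Submodule.subset_span (R := ℝ) hm)
        rwa [neg_neg] at h2
    · rintro x ⟨y, (h | h), rfl⟩
      · rcases h with h | h
        · subst h; rw [hef₁]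
          exact Submodule.subset_span (Or.inl (Or.inl rfl))
        · rw [Set.mem_singleton_iff] at h; subst h; rw [hef₂]
          exact Submodule.subset_span (Or.inl (Or.inr rfl))
      · rcases h with ⟨α, β, rfl⟩
        rw [hthird α β]
        exact Submodule.neg_mem _
          (Submodule.subset_span (Or.inr ⟨α, β, rfl⟩))
  rw [key]
  constructor
  · intro h; rw [h, Submodule.map_top, LinearMap.range_eq_top]
    exact e.surjective
  · intro h
    have hr : LinearMap.range (e : (Fin 3 → ℝ) →ₗ[ℝ] (Fin 3 → ℝ)) = ⊤ :=
      LinearMap.range_eq_top.2 e.surjective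
    have hk : LinearMap.ker (e : (Fin 3 → ℝ) →ₗ[ℝ] (Fin 3 → ℝ)) = ⊥ :=
      LinearMap.ker_eq_bot.2 e.injective
    have := (LinearMap.map_eq_top_iff hr).1 h
    rwa [hk, sup_bot_eq] at this
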